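/- Let N ≥ 2, let Γ : Fin N → ℝ, and let z : ℝ → Fin N → ℂ be differentiable on an open interval J with pairwise distinct positions, satisfying the point-vortex system dz_m/dt = (−1/(2πi)) ∑_{n≠m} Γ_n / (conj(z_m) − conj(z_n)) on J. Then the Hamiltonian H(t) = −(1/(2π)) ∑_{m<n} Γ_m Γ_n log |z_m(t) − z_n(t)| is constant on J. -/

import Mathlib

open Finset ComplexConjugate

lemma log_abs_hasDerivAt {f : ℝ → ℂ} {f' : ℂ} {t : ℝ} (hf : HasDerivAt f f' t)
    (hne : f t ≠ 0) :
    HasDerivAt (fun s => Real.log ‖f s‖) ((f' / f t).re) t := by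
  have hre : HasDerivAt (fun s => (f s).re) f'.re t :=
    Complex.reCLM.hasFDerivAt.comp_hasDerivAt t hf
  have him : HasDerivAt (fun s => (f s).im) f'.im t :=
    Complex.imCLM.hasFDerivAt.comp_hasDerivAt t hf
  have hn : HasDerivAt (fun s => Complex.normSq (f s))
      (2 * (f' * conj (f t)).re) t := by
    have h1 := (hre.mul hre).add (him.mul him)
    have heq : f'.re * (f t).re + (f t).re * f'.re + (f'.im * (f t).im + (f t).im * f'.im)
        = 2 * (f' * conj (f t)).re := by
      simp only [Complex.mul_re, Complex.conj_re, Complex.conj_im]; ring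
    rw [heq] at h1
    refine h1.congr_of_eventuallyEq (Filter.Eventually.of_forall fun s => ?_)
    simp [Complex.normSq_apply]
  have hns : Complex.normSq (f t) ≠ 0 := (Complex.normSq_pos.mpr hne).ne'
  have hlog : HasDerivAt (fun s => Real.log (Complex.normSq (f s)))
      ((Complex.normSq (f t))⁻¹ * (2 * (f' * conj (f t)).re)) t := by
    have := (Real.hasDerivAt_log hns).comp t hn; exact this
  have hval : (f' / f t).re = (Complex.normSq (f t))⁻¹ * (2 * (f' * conj (f t)).re) / 2 := by
    rw [div_eq_mul_inv f', Complex.inv_def, ← mul_assoc,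
      Complex.mul_re, Complex.ofReal_re, Complex.ofReal_im]
    ring
  have hfun : (fun s => Real.log ‖f s‖)
      = fun s => Real.log (Complex.normSq (f s)) / 2 := by
    ext s
    rw [Complex.norm_def, Real.log_sqrt (Complex.normSq_nonneg _)]
  rw [hfun, hval]
  exact hlog.div_const 2

lemma pair_sum {N : ℕ} {M : Type*} [AddCommMonoid M] (G : Fin N → Fin N → M) :
    ∑ m, ∑ n ∈ Finset.univ.filter (fun n => m < n), (G m n + G n m)
      = ∑ m, ∑ n ∈ Finset.univ.erase m, G m n := by
  have herase : ∀ m : Fin N, (Finset.univ.erase m) = Finset.univ.filter (fun n => n ≠ m) := by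
    intro m; ext n; simp
  simp only [herase, Finset.sum_filter]
  have hsplit : ∀ m, ∑ n, (if m < n then G m n + G n m else 0)
      = ∑ n, ((if m < n then G m n else 0) + (if m < n then G n m else 0)) := by
    intro m; apply Finset.sum_congr rfl; intro n _; split <;> simp
  simp only [hsplit, Finset.sum_add_distrib]
  have hswap : ∑ m : Fin N, ∑ n : Fin N, (if m < n then G n m else 0)
      = ∑ m : Fin N, ∑ n : Fin N, (if n < m then G m n else 0) := Finset.sum_comm
  rw [hswap, ← Finset.sum_add_distrib]
  apply Finset.sum_congr rfl; intro m _
  rw [← Finset.sum_add_distrib]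
  apply Finset.sum_congr rfl; intro n _
  rcases lt_trichotomy m n with h | h | h
  · simp [h, not_lt.mpr h.le, h.ne']
  · simp [h]
  · simp [h, not_lt.mpr h.le, h.ne]

lemma sum_zero {N : ℕ} (Γ : Fin N → ℝ) (ζ : Fin N → ℂ) (d S : Fin N → ℂ)
    (hS : ∀ m, S m = ∑ n ∈ Finset.univ.erase m, (Γ n : ℂ) / (ζ m - ζ n))
    (hd : ∀ m, d m = -1 / (2 * (Real.pi : ℂ) * Complex.I) * conj (S m)) :
    ∑ m, ∑ n ∈ Finset.univ.filter (fun n => m < n),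
      Γ m * Γ n * ((d m - d n) / (ζ m - ζ n)).re = 0 := by
  calc ∑ m, ∑ n ∈ Finset.univ.filter (fun n => m < n),
        Γ m * Γ n * ((d m - d n) / (ζ m - ζ n)).re
      = (∑ m, ∑ n ∈ Finset.univ.filter (fun n => m < n),
          ((Γ m : ℂ) * (Γ n : ℂ) * ((d m - d n) / (ζ m - ζ n)))).re := by
        rw [Complex.re_sum]
        refine Finset.sum_congr rfl fun m _ => ?_
        rw [Complex.re_sum]
        refine Finset.sum_congr rfl fun n _ => ?_
        rw [← Complex.ofReal_mul, Complex.re_ofReal_mul]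
    _ = (∑ m, ∑ n ∈ Finset.univ.erase m,
          ((Γ m : ℂ) * (Γ n : ℂ) * (d m / (ζ m - ζ n)))).re := by
        rw [← pair_sum (fun m n => (Γ m : ℂ) * (Γ n : ℂ) * (d m / (ζ m - ζ n)))]
        congr 1
        refine Finset.sum_congr rfl fun m _ => Finset.sum_congr rfl fun n _ => ?_
        have hneg : ζ n - ζ m = -(ζ m - ζ n) := by ring
        rw [hneg, div_neg, sub_div, mul_sub]
        ring
    _ = (∑ m, (Γ m : ℂ) * d m * S m).re := by
        congr 1
        refine Finset.sum_congr rfl fun m _ => ?_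
        rw [hS, Finset.mul_sum]
        refine Finset.sum_congr rfl fun n _ => ?_
        ring
    _ = ((-1 / (2 * (Real.pi : ℂ) * Complex.I)) *
          ((∑ m, Γ m * Complex.normSq (S m) : ℝ) : ℂ)).re := by
        congr 1
        rw [Complex.ofReal_sum, Finset.mul_sum]
        refine Finset.sum_congr rfl fun m _ => ?_
        rw [hd m, Complex.ofReal_mul]
        calc (Γ m : ℂ) * (-1 / (2 * (Real.pi : ℂ) * Complex.I) * conj (S m)) * S m
            = -1 / (2 * (Real.pi : ℂ) * Complex.I) * ((Γ m : ℂ) * (S m * conj (S m))) := by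
              ring
          _ = -1 / (2 * (Real.pi : ℂ) * Complex.I) *
                ((Γ m : ℂ) * (Complex.normSq (S m) : ℂ)) := by
              rw [Complex.mul_conj]
    _ = 0 := by
        rw [Complex.mul_re, Complex.ofReal_re, Complex.ofReal_im, mul_zero, sub_zero]
        have hc : ((-1 : ℂ) / (2 * (Real.pi : ℂ) * Complex.I)).re = 0 := by
          simp [Complex.div_re]
        rw [hc, zero_mul]

lemma conj_ode_sum {N : ℕ} (Γ : Fin N → ℝ) (ζ : Fin N → ℂ) (m : Fin N) :
    (∑ n ∈ Finset.univ.erase m, (Γ n : ℂ) / (conj (ζ m) - conj (ζ n)))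
      = conj (∑ n ∈ Finset.univ.erase m, (Γ n : ℂ) / (ζ m - ζ n)) := by
  rw [map_sum]
  refine Finset.sum_congr rfl fun n _ => ?_
  rw [map_div₀, map_sub, Complex.conj_ofReal]

lemma hasDerivAt_H {N : ℕ} (Γ : Fin N → ℝ) (z : ℝ → Fin N → ℂ) (x : ℝ) (d : Fin N → ℂ)
    (hd : ∀ m, HasDerivAt (fun s => z s m) (d m) x)
    (hdist : ∀ m n : Fin N, m ≠ n → z x m ≠ z x n) :
    HasDerivAt (fun s => -(1 / (2 * Real.pi)) * ∑ m, ∑ n ∈ Finset.univ.filter (fun n => m < n),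
        Γ m * Γ n * Real.log (‖z s m - z s n‖))
      (-(1 / (2 * Real.pi)) * ∑ m, ∑ n ∈ Finset.univ.filter (fun n => m < n),
        Γ m * Γ n * ((d m - d n) / (z x m - z x n)).re) x := by
  apply HasDerivAt.const_mul
  apply HasDerivAt.fun_sum
  intro m _
  apply HasDerivAt.fun_sum
  intro n hn
  have hmn : m ≠ n := (Finset.mem_filter.mp hn).2.ne
  have hw : HasDerivAt (fun s => z s m - z s n) (d m - d n) x := (hd m).sub (hd n)
  have hne : z x m - z x n ≠ 0 := sub_ne_zero.mpr (hdist m n hmn)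
  exact (log_abs_hasDerivAt hw hne).const_mul (Γ m * Γ n)

lemma const_on {f : ℝ → ℝ} {a b : ℝ} (hderiv : ∀ x ∈ Set.Ioo a b, HasDerivAt f 0 x) :
    ∀ t ∈ Set.Ioo a b, ∀ s ∈ Set.Ioo a b, f t = f s := by
  have key : ∀ u ∈ Set.Ioo a b, ∀ v ∈ Set.Ioo a b, u ≤ v → f u = f v := by
    intro u hu v hv huv
    have hsub : Set.Icc u v ⊆ Set.Ioo a b := fun y hy =>
      ⟨lt_of_lt_of_le hu.1 hy.1, lt_of_le_of_lt hy.2 hv.2⟩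
    have hcont : ContinuousOn f (Set.Icc u v) := fun y hy =>
      (hderiv y (hsub hy)).continuousAt.continuousWithinAt
    have hdr : ∀ y ∈ Set.Ico u v, HasDerivWithinAt f 0 (Set.Ici y) y := fun y hy =>
      (hderiv y (hsub ⟨hy.1, hy.2.le⟩)).hasDerivWithinAt
    exact (constant_of_has_deriv_right_zero hcont hdr v ⟨huv, le_refl v⟩).symm
  intro t ht s hs
  rcases le_total t s with h | h
  · exact key t ht s hs h
  · exact (key s hs t ht h).symm

/-- For solutions of the point-vortex system on an open interval, the Hamiltonian
`H(t) = -(1/(2π)) ∑_{m<n} Γ_m Γ_n log |z_m(t) - z_n(t)|` is constant. -/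
theorem hamiltonian_invariant (N : ℕ) (hN : 2 ≤ N) (Γ : Fin N → ℝ) (a b : ℝ)
    (z : ℝ → Fin N → ℂ)
    (hdiff : ∀ t ∈ Set.Ioo a b, ∀ m : Fin N, DifferentiableAt ℝ (fun s => z s m) t)
    (hdist : ∀ t ∈ Set.Ioo a b, ∀ m n : Fin N, m ≠ n → z t m ≠ z t n)
    (hode : ∀ t ∈ Set.Ioo a b, ∀ m : Fin N,
      HasDerivAt (fun s => z s m)
        (-1 / (2 * (Real.pi : ℂ) * Complex.I) *
          ∑ n ∈ Finset.univ.erase m, (Γ n : ℂ) / (conj (z t m) - conj (z t n))) t) :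
    ∀ t ∈ Set.Ioo a b, ∀ s ∈ Set.Ioo a b,
      -(1 / (2 * Real.pi)) * ∑ m, ∑ n ∈ Finset.univ.filter (fun n => m < n),
          Γ m * Γ n * Real.log (‖z t m - z t n‖)
      = -(1 / (2 * Real.pi)) * ∑ m, ∑ n ∈ Finset.univ.filter (fun n => m < n),
          Γ m * Γ n * Real.log (‖z s m - z s n‖) := by
  have hderiv : ∀ x ∈ Set.Ioo a b,
      HasDerivAt (fun s => -(1 / (2 * Real.pi)) *
        ∑ m, ∑ n ∈ Finset.univ.filter (fun n => m < n),
          Γ m * Γ n * Real.log (‖z s m - z s n‖)) 0 x := by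
    intro x hx
    have hzero : ∑ m, ∑ n ∈ Finset.univ.filter (fun n => m < n),
        Γ m * Γ n * (((-1 / (2 * (Real.pi : ℂ) * Complex.I) *
            ∑ k ∈ Finset.univ.erase m, (Γ k : ℂ) / (conj (z x m) - conj (z x k)))
          - (-1 / (2 * (Real.pi : ℂ) * Complex.I) *
            ∑ k ∈ Finset.univ.erase n, (Γ k : ℂ) / (conj (z x n) - conj (z x k))))
          / (z x m - z x n)).re = 0 := by
      apply sum_zero Γ (z x) _ (fun m => ∑ k ∈ Finset.univ.erase m, (Γ k : ℂ) / (z x m - z x k))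
      · intro m; rfl
      · intro m
        rw [← conj_ode_sum]
    have h1 := hasDerivAt_H Γ z x _ (hode x hx) (hdist x hx)
    rw [hzero, mul_zero] at h1
    exact h1
  exact fun t ht s hs => const_on hderiv t ht s hs
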